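/- Let (c_n)_{n≥1} be a sequence of real numbers with c_n ≥ e for all n and (log c_n)/n → 0 as n → ∞. Then there exists a sequence (s_n)_{n≥1} of real numbers such that (i) s_n ≥ c_n for all n, (ii) (s_n) is monotone increasing, and (iii) the sequence ((log s_n)/n)_{n≥1} is monotone decreasing and converges to 0. -/

import Mathlib

open Filter

noncomputable def fseq (c : ℕ → ℝ) (n : ℕ) : ℝ := Real.log (c n) / n

noncomputable def aseq (c : ℕ → ℝ) (n : ℕ) : ℝ := ⨆ m : ℕ, fseq c (n + m)

noncomputable def bseq (c : ℕ → ℝ) : ℕ → ℝ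
  | 0 => aseq c 1
  | 1 => aseq c 1
  | (n+2) => max (aseq c (n+2)) ((n+1 : ℝ) * bseq c (n+1) / (n+2))

theorem stmt0 (c : ℕ → ℝ) (hc : ∀ n, 1 ≤ n → Real.exp 1 ≤ c n)
    (hsub : Tendsto (fun n => Real.log (c n) / n) atTop (nhds 0)) :
    ∃ s : ℕ → ℝ,
      (∀ n, 1 ≤ n → c n ≤ s n) ∧
      (∀ n m, 1 ≤ n → n ≤ m → s n ≤ s m) ∧
      (∀ n, 1 ≤ n → Real.log (s (n + 1)) / (n + 1) ≤ Real.log (s n) / n) ∧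
      Tendsto (fun n => Real.log (s n) / n) atTop (nhds 0) := by
  set f := fseq c with hf
  set a := aseq c with ha
  set b := bseq c with hb
  have hsubf : Tendsto f atTop (nhds 0) := hsub
  have hbdd : BddAbove (Set.range f) := hsubf.bddAbove_range
  have hbdd' : ∀ n, BddAbove (Set.range fun m => f (n + m)) := by
    intro n
    exact hbdd.mono (by rintro x ⟨m, rfl⟩; exact ⟨n + m, rfl⟩)
  -- basic facts about f
  have hf_nonneg : ∀ n, 1 ≤ n → (1:ℝ)/n ≤ f n := by
    intro n hn
    have hcn := hc n hn
    have hlog : 1 ≤ Real.log (c n) := by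
      have := Real.log_le_log (Real.exp_pos 1) hcn
      simpa [Real.log_exp] using this
    have hnpos : (0:ℝ) < n := by exact_mod_cast hn
    simp only [hf, fseq]
    gcongr
  -- f n ≤ a n
  have hfa : ∀ n, f n ≤ a n := by
    intro n
    have := le_ciSup (hbdd' n) 0
    simpa [ha, aseq, hf] using this
  -- a antitone
  have ha_anti : ∀ n, a (n+1) ≤ a n := by
    intro n
    apply ciSup_le
    intro m
    have := le_ciSup (hbdd' n) (m+1)
    rw [show n + 1 + m = n + (m + 1) by omega]
    exact this
  have ha_anti' : ∀ n m, n ≤ m → a m ≤ a n := by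
    intro n m hnm
    induction m with
    | zero => simpa [Nat.le_zero.mp hnm]
    | succ k ih =>
      rcases Nat.lt_or_ge n (k+1) with h | h
      · exact (ha_anti k).trans (ih (Nat.lt_succ_iff.mp h))
      · have : n = k + 1 := le_antisymm (by omega) h
        simp [this]
  -- a nonneg for n ≥ 1
  have ha_nonneg : ∀ n, 1 ≤ n → 0 ≤ a n := by
    intro n hn
    have h1 : (0:ℝ) < (1:ℝ)/n := by
      have : (0:ℝ) < n := by exact_mod_cast hn
      positivity
    linarith [hfa n, hf_nonneg n hn]
  -- a tends to 0
  have ha_tendsto : Tendsto a atTop (nhds 0) := by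
    rw [Metric.tendsto_atTop]
    intro ε hε
    rw [Metric.tendsto_atTop] at hsubf
    obtain ⟨N, hN⟩ := hsubf (ε/2) (by linarith)
    refine ⟨max N 1, fun n hn => ?_⟩
    have hn1 : 1 ≤ n := le_trans (le_max_right _ _) hn
    have hnN : N ≤ n := le_trans (le_max_left _ _) hn
    have hle : a n ≤ ε/2 := by
      apply ciSup_le
      intro m
      have := hN (n + m) (by omega)
      have : |f (n+m) - 0| < ε/2 := by simpa [Real.dist_eq] using this
      calc f (n+m) ≤ |f (n+m) - 0| := by
            rw [sub_zero]; exact le_abs_self _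
        _ ≤ ε/2 := this.le
    have h0 : 0 ≤ a n := ha_nonneg n hn1
    rw [Real.dist_eq, sub_zero, abs_of_nonneg h0]
    linarith
  -- recursion equation for b for m ≥ 1
  have hb_rec : ∀ m, 1 ≤ m → b (m+1) = max (a (m+1)) ((m:ℝ) * b m / (m+1)) := by
    intro m hm
    obtain ⟨k, rfl⟩ := Nat.exists_eq_add_of_le hm
    show bseq c (1 + k + 1) = _
    have : 1 + k + 1 = k + 2 := by omega
    rw [this]
    simp only [bseq, ha, hb]
    norm_num
    congr 2 <;> push_cast <;> ring_nf
  have hb1 : b 1 = a 1 := rfl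
  -- a n ≤ b n for n ≥ 1
  have hab : ∀ n, 1 ≤ n → a n ≤ b n := by
    intro n hn
    match n, hn with
    | 1, _ => simp [hb1]
    | (m+2), _ =>
      rw [hb_rec (m+1) (by omega)]
      exact le_max_left _ _
  have hb_nonneg : ∀ n, 1 ≤ n → 0 ≤ b n := fun n hn =>
    le_trans (ha_nonneg n hn) (hab n hn)
  -- b antitone on ≥ 1
  have hb_anti : ∀ n, 1 ≤ n → b (n+1) ≤ b n := by
    intro n hn
    rw [hb_rec n hn]
    apply max_le
    · exact le_trans (ha_anti n) (hab n hn)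
    · have hbn := hb_nonneg n hn
      have hn1 : (0:ℝ) < (n:ℝ) + 1 := by positivity
      rw [div_le_iff₀ hn1]
      nlinarith [hbn]
  -- n * b n increasing
  have hnb_mono : ∀ n : ℕ, 1 ≤ n → (n:ℝ) * b n ≤ ((n:ℝ)+1) * b (n+1) := by
    intro n hn
    rw [hb_rec n hn]
    have hn1 : (0:ℝ) < (n:ℝ) + 1 := by positivity
    have h2 : (n:ℝ) * b n / (n+1) ≤ max (a (n+1)) ((n:ℝ) * b n / (n+1)) := le_max_right _ _
    calc (n:ℝ) * b n = ((n:ℝ)+1) * ((n:ℝ) * b n / (n+1)) := by field_simp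
      _ ≤ ((n:ℝ)+1) * max (a (n+1)) ((n:ℝ) * b n / (n+1)) := by
          exact mul_le_mul_of_nonneg_left h2 (by positivity)
  have hnb_mono' : ∀ n m : ℕ, 1 ≤ n → n ≤ m → (n:ℝ) * b n ≤ (m:ℝ) * b m := by
    intro n m hn hnm
    induction m with
    | zero => omega
    | succ k ih =>
      rcases Nat.lt_or_ge n (k+1) with h | h
      · have hk1 : 1 ≤ k := by omega
        have := hnb_mono k hk1
        push_cast at this ⊢
        exact le_trans (ih (by omega)) (by push_cast; linarith)
      · have : n = k + 1 := le_antisymm (by omega) h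
        simp [this]
  -- b tends to 0
  have hb_tendsto : Tendsto b atTop (nhds 0) := by
    rw [Metric.tendsto_atTop]
    intro ε hε
    rw [Metric.tendsto_atTop] at ha_tendsto
    obtain ⟨N₀, hN₀⟩ := ha_tendsto (ε/4) (by linarith)
    set N := max N₀ 1 with hN
    have hN1 : 1 ≤ N := le_max_right _ _
    have haN : ∀ k, N ≤ k → a k ≤ ε/4 := by
      intro k hk
      have := hN₀ k (le_trans (le_max_left _ _) hk)
      rw [Real.dist_eq, sub_zero] at this
      exact (le_abs_self _).trans this.le
    -- key bound: n * b n ≤ N * b N + n * (ε/4) for n ≥ N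
    have key : ∀ n, N ≤ n → (n:ℝ) * b n ≤ (N:ℝ) * b N + (n:ℝ) * (ε/4) := by
      intro n hn
      induction n with
      | zero => omega
      | succ k ih =>
        rcases Nat.lt_or_ge k N with h | h
        · have : k + 1 = N := by omega
          rw [this]
          have : (0:ℝ) ≤ (N:ℝ) * (ε/4) := by positivity
          linarith
        · have hk1 : 1 ≤ k := le_trans hN1 h
          have ihh := ih h
          have hrec := hb_rec k hk1
          have ha1 : a (k+1) ≤ ε/4 := haN (k+1) (by omega)
          have heq : ((k:ℝ)+1) * b (k+1) = max (((k:ℝ)+1) * a (k+1)) ((k:ℝ) * b k) := by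
            rw [hrec]
            rw [mul_max_of_nonneg _ _ (by positivity : (0:ℝ) ≤ (k:ℝ)+1)]
            congr 1
            field_simp
          push_cast
          rw [heq]
          apply max_le
          · have hNb : (0:ℝ) ≤ (N:ℝ) * b N := by
              have := hb_nonneg N hN1
              positivity
            nlinarith [ha1, hNb]
          · have : (k:ℝ) * (ε/4) ≤ ((k:ℝ)+1) * (ε/4) := by nlinarith
            linarith
    -- choose n₀ large
    obtain ⟨M, hM⟩ := exists_nat_gt ((N:ℝ) * b N / (ε/4))
    refine ⟨max (max N 1) (M+1), fun n hn => ?_⟩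
    have hnN : N ≤ n := le_trans (le_trans (le_max_left _ _) (le_max_left _ _)) hn
    have hn1 : 1 ≤ n := le_trans (le_trans (le_max_right _ _) (le_max_left _ _)) hn
    have hnM : (M:ℝ) < (n:ℝ) := by
      have : M + 1 ≤ n := le_trans (le_max_right _ _) hn
      exact_mod_cast Nat.lt_of_succ_le this
    have hnpos : (0:ℝ) < n := by exact_mod_cast hn1
    have hkey := key n hnN
    have hbn : b n ≤ (N:ℝ) * b N / n + ε/4 := by
      rw [div_add' _ _ _ (ne_of_gt hnpos), le_div_iff₀ hnpos]
      nlinarith [hkey]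
    have hsmall : (N:ℝ) * b N / n ≤ ε/4 := by
      have hNbN : (0:ℝ) ≤ (N:ℝ) * b N := by
        have := hb_nonneg N hN1; positivity
      rw [div_le_iff₀ hnpos]
      have h1 : (N:ℝ) * b N / (ε/4) < n := lt_of_le_of_lt hM.le hnM
      rw [div_lt_iff₀ (by linarith : (0:ℝ) < ε/4)] at h1
      linarith
    have h0 : 0 ≤ b n := hb_nonneg n hn1
    rw [Real.dist_eq, sub_zero, abs_of_nonneg h0]
    linarith
  -- define s
  refine ⟨fun n => Real.exp ((n:ℝ) * b n), ?_, ?_, ?_, ?_⟩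
  · intro n hn
    have hcn := hc n hn
    have hcpos : 0 < c n := lt_of_lt_of_le (Real.exp_pos 1) hcn
    have hnpos : (0:ℝ) < n := by exact_mod_cast hn
    have : Real.log (c n) ≤ (n:ℝ) * b n := by
      have h1 : f n ≤ b n := le_trans (hfa n) (hab n hn)
      have : Real.log (c n) / n ≤ b n := by simpa [hf, fseq] using h1
      calc Real.log (c n) = (n:ℝ) * (Real.log (c n) / n) := by field_simp
        _ ≤ (n:ℝ) * b n := mul_le_mul_of_nonneg_left this (le_of_lt hnpos)
    calc c n = Real.exp (Real.log (c n)) := (Real.exp_log hcpos).symm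
      _ ≤ Real.exp ((n:ℝ) * b n) := Real.exp_le_exp.mpr this
  · intro n m hn hnm
    exact Real.exp_le_exp.mpr (hnb_mono' n m hn hnm)
  · intro n hn
    have hnpos : (0:ℝ) < n := by exact_mod_cast hn
    rw [Real.log_exp, Real.log_exp]
    have h1 : (n:ℝ) * b n / n = b n := by field_simp
    have h2 : ((n:ℝ)+1) * b (n+1) / ((n:ℝ)+1) = b (n+1) := by
      field_simp
    push_cast
    rw [h1, h2]
    exact hb_anti n hn
  · have : ∀ᶠ n : ℕ in atTop, Real.log (Real.exp ((n:ℝ) * b n)) / n = b n := by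
      filter_upwards [eventually_ge_atTop 1] with n hn
      have hnpos : (0:ℝ) < (n:ℝ) := by exact_mod_cast Nat.lt_of_lt_of_le Nat.zero_lt_one hn
      rw [Real.log_exp]
      field_simp
    exact Tendsto.congr' (this.mono fun n h => h.symm) hb_tendsto
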